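/- arXiv:2602.05020 — 6 statements merged into one kernel-verified Lean document; each statement's English description precedes it below -/
import Mathlib

section
/- Let i* ∈ Fin s and let x0 ∈ X satisfy x0 i* ≠ 0 and x0 i = 0 for all i ≠ i*. Assume there exist constants C, σ > 0 and an admissible pair (x, u) from x0 such that ‖x(t)‖ ≤ C·e^{−σt}·‖x0‖ and ‖u(t)‖ ≤ C·e^{−σt}·‖x0‖ for all t ≥ 0. Let (x*, u*) be an optimal admissible pair from x0. Then (∫₀^∞ ‖x*(t)‖² dt)^{1/2} ≤ C·√((M_Q + M_R)/(2σμ)) · ‖x0 i*‖. -/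
open scoped RealInnerProductSpace ENNReal
open MeasureTheory

/-- **Influence of the initial perturbation (Lemma 4.1).**
Under the exponential asymptotic controllability assumption, the `L²`-norm of an
optimal trajectory emanating from an initial value supported on a single node `i*`
is bounded by `C·√((M_Q + M_R)/(2σμ))·‖x0 i*‖`. -/
theorem initial_perturbation_L2_bound
    (s : ℕ) (hs : 1 ≤ s) (n m : Fin s → ℕ)
    -- the state cost matrix Q, symmetric and positive definite
    (Q : PiLp 2 (fun i : Fin s => EuclideanSpace ℝ (Fin (n i))) →L[ℝ]
         PiLp 2 (fun i : Fin s => EuclideanSpace ℝ (Fin (n i))))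
    (hQsymm : ∀ x y, ⟪x, Q y⟫ = ⟪Q x, y⟫)
    (μ M_Q : ℝ) (hμ : 0 < μ) (hMQ : 0 < M_Q)
    (hQlb : ∀ x, μ * ‖x‖ ^ 2 ≤ ⟪x, Q x⟫)
    (hQub : ∀ x, ‖Q x‖ ≤ M_Q * ‖x‖)
    -- the control cost matrix R, symmetric positive semidefinite
    (R : PiLp 2 (fun i : Fin s => EuclideanSpace ℝ (Fin (m i))) →L[ℝ]
         PiLp 2 (fun i : Fin s => EuclideanSpace ℝ (Fin (m i))))
    (hRsymm : ∀ u v, ⟪u, R v⟫ = ⟪R u, v⟫)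
    (hRpsd : ∀ u, 0 ≤ ⟪u, R u⟫)
    (M_R : ℝ) (hMR : 0 < M_R)
    (hRub : ∀ u, ‖R u‖ ≤ M_R * ‖u‖)
    -- the decoupled dynamics
    (f : ∀ i : Fin s, EuclideanSpace ℝ (Fin (n i)) × EuclideanSpace ℝ (Fin (m i)) →
          EuclideanSpace ℝ (Fin (n i)))
    (hf_cont : ∀ i, Continuous (f i))
    (hf0 : ∀ i, f i (0, 0) = 0)
    -- the initial value: localized perturbation at node i*
    (istar : Fin s)
    (x0 : PiLp 2 (fun i : Fin s => EuclideanSpace ℝ (Fin (n i))))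
    (hx0_ne : x0 istar ≠ 0)
    (hx0_zero : ∀ i, i ≠ istar → x0 i = 0)
    -- Assumption 1: exponentially decaying admissible pair from x0
    (C σ : ℝ) (hC : 0 < C) (hσ : 0 < σ)
    (xa : ℝ → PiLp 2 (fun i : Fin s => EuclideanSpace ℝ (Fin (n i))))
    (ua : ℝ → PiLp 2 (fun i : Fin s => EuclideanSpace ℝ (Fin (m i))))
    (hxa_cont : ContinuousOn xa (Set.Ici 0))
    (hua_meas : ∀ i, Measurable fun t => ua t i)
    (hxa_init : xa 0 = x0)
    (hxa_ode : ∀ (i : Fin s), ∀ t ≥ (0:ℝ),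
      HasDerivAt (fun τ => xa τ i) (f i (xa t i, ua t i)) t)
    (hxa_dec : ∀ t ≥ (0:ℝ), ‖xa t‖ ≤ C * Real.exp (-σ * t) * ‖x0‖)
    (hua_dec : ∀ t ≥ (0:ℝ), ‖ua t‖ ≤ C * Real.exp (-σ * t) * ‖x0‖)
    -- the optimal admissible pair (x*, u*) from x0
    (xs : ℝ → PiLp 2 (fun i : Fin s => EuclideanSpace ℝ (Fin (n i))))
    (us : ℝ → PiLp 2 (fun i : Fin s => EuclideanSpace ℝ (Fin (m i))))
    (hxs_cont : ContinuousOn xs (Set.Ici 0))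
    (hus_meas : ∀ i, Measurable fun t => us t i)
    (hxs_init : xs 0 = x0)
    (hxs_ode : ∀ (i : Fin s), ∀ t ≥ (0:ℝ),
      HasDerivAt (fun τ => xs τ i) (f i (xs t i, us t i)) t)
    (hopt : ∀ (x : ℝ → PiLp 2 (fun i : Fin s => EuclideanSpace ℝ (Fin (n i))))
              (u : ℝ → PiLp 2 (fun i : Fin s => EuclideanSpace ℝ (Fin (m i)))),
      ContinuousOn x (Set.Ici 0) → (∀ i, Measurable fun t => u t i) → x 0 = x0 →
      (∀ (i : Fin s), ∀ t ≥ (0:ℝ),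
        HasDerivAt (fun τ => x τ i) (f i (x t i, u t i)) t) →
      (∫⁻ t in Set.Ioi (0:ℝ),
          ENNReal.ofReal (⟪xs t, Q (xs t)⟫ + ⟪us t, R (us t)⟫)) ≤
        ∫⁻ t in Set.Ioi (0:ℝ),
          ENNReal.ofReal (⟪x t, Q (x t)⟫ + ⟪u t, R (u t)⟫)) :
    (∫⁻ t in Set.Ioi (0:ℝ), ENNReal.ofReal (‖xs t‖ ^ 2)) ^ ((1:ℝ)/2) ≤
      ENNReal.ofReal (C * Real.sqrt ((M_Q + M_R) / (2 * σ * μ)) * ‖x0 istar‖) := by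
  set I : ℝ≥0∞ := ∫⁻ t in Set.Ioi (0:ℝ), ENNReal.ofReal (‖xs t‖ ^ 2) with hI
  set Js : ℝ≥0∞ := ∫⁻ t in Set.Ioi (0:ℝ),
      ENNReal.ofReal (⟪xs t, Q (xs t)⟫ + ⟪us t, R (us t)⟫) with hJs
  have hx0 : ‖x0‖ = ‖x0 istar‖ := by
    have h1 : ‖x0‖ ^ 2 = ∑ i, ‖x0 i‖ ^ 2 := by
      have := PiLp.norm_eq_of_L2 x0
      rw [this, Real.sq_sqrt]
      positivity
    have h2 : ∑ i, ‖x0 i‖ ^ 2 = ‖x0 istar‖ ^ 2 := by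
      refine Finset.sum_eq_single istar (fun i _ hi => by simp [hx0_zero i hi]) (by simp)
    have h3 : ‖x0‖ ^ 2 = ‖x0 istar‖ ^ 2 := h1.trans h2
    calc ‖x0‖ = Real.sqrt (‖x0‖ ^ 2) := (Real.sqrt_sq (norm_nonneg _)).symm
      _ = Real.sqrt (‖x0 istar‖ ^ 2) := by rw [h3]
      _ = ‖x0 istar‖ := Real.sqrt_sq (norm_nonneg _)
  set K : ℝ := (M_Q + M_R) * (C * ‖x0‖) ^ 2 with hK
  have hKnn : 0 ≤ K := by positivity
  -- Step 1 : Js ≤ J(xa, ua)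
  have step1 : Js ≤ ∫⁻ t in Set.Ioi (0:ℝ),
      ENNReal.ofReal (⟪xa t, Q (xa t)⟫ + ⟪ua t, R (ua t)⟫) :=
    hopt xa ua hxa_cont hua_meas hxa_init hxa_ode
  -- Step 2 : J(xa, ua) ≤ ∫ K e^{-2σt}
  have step2 : (∫⁻ t in Set.Ioi (0:ℝ),
      ENNReal.ofReal (⟪xa t, Q (xa t)⟫ + ⟪ua t, R (ua t)⟫)) ≤
      ∫⁻ t in Set.Ioi (0:ℝ), ENNReal.ofReal (K * Real.exp (-(2 * σ * t))) := by
    refine lintegral_mono_ae ((ae_restrict_iff' measurableSet_Ioi).2 (ae_of_all _ ?_))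
    intro t ht
    have ht' : (0:ℝ) ≤ t := le_of_lt ht
    refine ENNReal.ofReal_le_ofReal ?_
    have hxb := hxa_dec t ht'
    have hub := hua_dec t ht'
    have hb0 : 0 ≤ C * Real.exp (-σ * t) * ‖x0‖ := by positivity
    have hQ : ⟪xa t, Q (xa t)⟫ ≤ M_Q * ‖xa t‖ ^ 2 := by
      calc ⟪xa t, Q (xa t)⟫ ≤ ‖xa t‖ * ‖Q (xa t)‖ := real_inner_le_norm _ _
        _ ≤ ‖xa t‖ * (M_Q * ‖xa t‖) :=
          mul_le_mul_of_nonneg_left (hQub _) (norm_nonneg _)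
        _ = M_Q * ‖xa t‖ ^ 2 := by ring
    have hR : ⟪ua t, R (ua t)⟫ ≤ M_R * ‖ua t‖ ^ 2 := by
      calc ⟪ua t, R (ua t)⟫ ≤ ‖ua t‖ * ‖R (ua t)‖ := real_inner_le_norm _ _
        _ ≤ ‖ua t‖ * (M_R * ‖ua t‖) :=
          mul_le_mul_of_nonneg_left (hRub _) (norm_nonneg _)
        _ = M_R * ‖ua t‖ ^ 2 := by ring
    have hxsq : ‖xa t‖ ^ 2 ≤ (C * Real.exp (-σ * t) * ‖x0‖) ^ 2 :=
      pow_le_pow_left₀ (norm_nonneg _) hxb 2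
    have husq : ‖ua t‖ ^ 2 ≤ (C * Real.exp (-σ * t) * ‖x0‖) ^ 2 :=
      pow_le_pow_left₀ (norm_nonneg _) hub 2
    have hexp : Real.exp (-σ * t) ^ 2 = Real.exp (-(2 * σ * t)) := by
      rw [← Real.exp_nat_mul]; ring_nf
    have : ⟪xa t, Q (xa t)⟫ + ⟪ua t, R (ua t)⟫ ≤
        (M_Q + M_R) * (C * Real.exp (-σ * t) * ‖x0‖) ^ 2 := by
      nlinarith [hQ, hR, hxsq, husq, hMQ.le, hMR.le]
    calc ⟪xa t, Q (xa t)⟫ + ⟪ua t, R (ua t)⟫ ≤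
        (M_Q + M_R) * (C * Real.exp (-σ * t) * ‖x0‖) ^ 2 := this
      _ = K * Real.exp (-(2 * σ * t)) := by rw [hK, ← hexp]; ring
  -- Step 3 : compute the exponential integral
  have hexp_int : (∫ t in Set.Ioi (0:ℝ), K * Real.exp (-(2 * σ * t))) =
      K / (2 * σ) := by
    have h2σ : (0:ℝ) < 2 * σ := by linarith
    rw [MeasureTheory.integral_const_mul]
    have h := integral_comp_mul_left_Ioi (fun y => Real.exp (-y)) 0 h2σ
    simp only [smul_eq_mul, mul_zero] at h
    rw [h, integral_exp_neg_Ioi]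
    simp [div_eq_mul_inv, mul_comm]
  have step3 : (∫⁻ t in Set.Ioi (0:ℝ),
      ENNReal.ofReal (K * Real.exp (-(2 * σ * t)))) = ENNReal.ofReal (K / (2 * σ)) := by
    rw [← hexp_int, ← MeasureTheory.ofReal_integral_eq_lintegral_ofReal]
    · exact (exp_neg_integrableOn_Ioi 0 (by linarith : (0:ℝ) < 2*σ)).congr_fun
        (fun t _ => by ring_nf) measurableSet_Ioi |>.const_mul K
    · exact ae_of_all _ fun t => by positivity
  -- Step 4 : μ • I ≤ Js
  have step4 : ENNReal.ofReal μ * I ≤ Js := by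
    rw [hI, ← lintegral_const_mul' _ _ ENNReal.ofReal_ne_top]
    refine lintegral_mono fun t => ?_
    rw [← ENNReal.ofReal_mul hμ.le]
    refine ENNReal.ofReal_le_ofReal ?_
    have := hQlb (xs t); have := hRpsd (us t); linarith
  -- combine : I ≤ ofReal (K / (2σ) / μ)
  have hμ0 : ENNReal.ofReal μ ≠ 0 := by simp [hμ]
  have hbound : I ≤ ENNReal.ofReal (K / (2 * σ) / μ) := by
    have h : ENNReal.ofReal μ * I ≤ ENNReal.ofReal (K / (2 * σ)) :=
      step4.trans (step1.trans (step2.trans_eq step3))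
    rw [ENNReal.ofReal_div_of_pos hμ]
    rw [ENNReal.le_div_iff_mul_le (Or.inl hμ0) (Or.inl ENNReal.ofReal_ne_top)]
    rwa [mul_comm]
  -- take square roots
  have hfinal : Real.sqrt (K / (2 * σ) / μ) =
      C * Real.sqrt ((M_Q + M_R) / (2 * σ * μ)) * ‖x0 istar‖ := by
    have : K / (2 * σ) / μ = (C * ‖x0 istar‖) ^ 2 * ((M_Q + M_R) / (2 * σ * μ)) := by
      rw [hK, hx0]; field_simp
    rw [this, Real.sqrt_mul (by positivity), Real.sqrt_sq (by positivity)]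
    ring
  calc I ^ ((1:ℝ)/2) ≤ ENNReal.ofReal (K / (2 * σ) / μ) ^ ((1:ℝ)/2) :=
      ENNReal.rpow_le_rpow hbound (by norm_num)
    _ = ENNReal.ofReal ((K / (2 * σ) / μ) ^ ((1:ℝ)/2)) := by
      rw [← ENNReal.ofReal_rpow_of_nonneg (by positivity) (by norm_num)]
    _ = ENNReal.ofReal (C * Real.sqrt ((M_Q + M_R) / (2 * σ * μ)) * ‖x0 istar‖) := by
      rw [← hfinal, Real.sqrt_eq_rpow]
end

section
/- Let I, J ⊆ Fin s be disjoint index sets and let x̂ : [0,∞) → Π_{j∈J} EuclideanSpace ℝ (Fin (n j)) be measurable with ∫₀^∞ Σ_{j∈J} ‖x̂_j(t)‖² dt < ∞. Let (x̃*, ũ*) be a reduced admissible pair from the zero initial condition (x_i(0) = 0 for all i ∈ I) such that the function t ↦ ℓ_I(x̃*(t), ũ*(t), x̂(t)) is Lebesgue integrable and J_I(x̃*, ũ*, x̂) ≤ J_I(x, u, x̂) for every reduced admissible pair (x, u) from the zero initial condition whose cost integrand is Lebesgue integrable. Then (∫₀^∞ Σ_{i∈I} ‖x̃*_i(t)‖²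 dt)^{1/2} ≤ (2·M_Q/μ) · (∫₀^∞ Σ_{j∈J} ‖x̂_j(t)‖² dt)^{1/2}. -/
open scoped RealInnerProductSpace ENNReal
open MeasureTheory

private lemma sum_dite_sub {s : ℕ} (I : Finset (Fin s)) (g : Fin s → ℝ) (F : I → ℝ)
    (h1 : ∀ (i : Fin s) (h : i ∈ I), g i = F ⟨i, h⟩)
    (h0 : ∀ i : Fin s, i ∉ I → g i = 0) :
    ∑ i, g i = ∑ i : I, F i := by
  rw [← Finset.sum_subset I.subset_univ (fun x _ hx => h0 x hx),
    ← Finset.sum_attach I g, Finset.univ_eq_attach]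
  exact Finset.sum_congr rfl fun i _ => h1 i i.2

private lemma key_quad {s : ℕ} {n : Fin s → ℕ}
    (Q : PiLp 2 (fun i : Fin s => EuclideanSpace ℝ (Fin (n i))) →L[ℝ]
         PiLp 2 (fun i : Fin s => EuclideanSpace ℝ (Fin (n i))))
    {μ M_Q : ℝ}
    (hQlb : ∀ x, μ * ‖x‖ ^ 2 ≤ ⟪x, Q x⟫)
    (hQub : ∀ x, ‖Q x‖ ≤ M_Q * ‖x‖)
    (Qblk : ∀ i j : Fin s, EuclideanSpace ℝ (Fin (n j)) →ₗ[ℝ] EuclideanSpace ℝ (Fin (n i)))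
    (hQblk : ∀ x (i : Fin s), Q x i = ∑ j, Qblk i j (x j))
    (I J : Finset (Fin s))
    (xI : ∀ i : I, EuclideanSpace ℝ (Fin (n ↑i)))
    (xJ : ∀ j : J, EuclideanSpace ℝ (Fin (n ↑j))) :
    μ * (∑ i : I, ‖xI i‖ ^ 2) -
      2 * M_Q * (Real.sqrt (∑ i : I, ‖xI i‖ ^ 2) * Real.sqrt (∑ j : J, ‖xJ j‖ ^ 2)) ≤
    (∑ i : I, ∑ j : J, (⟪xI i, Qblk ↑i ↑j (xJ j)⟫ + ⟪xJ j, Qblk ↑j ↑i (xI i)⟫)) +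
      (∑ i : I, ∑ i' : I, ⟪xI i, Qblk ↑i ↑i' (xI i')⟫) := by
  classical
  set X : PiLp 2 (fun i : Fin s => EuclideanSpace ℝ (Fin (n i))) :=
    WithLp.toLp 2 (fun i => if h : i ∈ I then xI ⟨i, h⟩ else 0) with hX
  set Y : PiLp 2 (fun i : Fin s => EuclideanSpace ℝ (Fin (n i))) :=
    WithLp.toLp 2 (fun j => if h : j ∈ J then xJ ⟨j, h⟩ else 0) with hY
  have hnX : ‖X‖ ^ 2 = ∑ i : I, ‖xI i‖ ^ 2 := by
    rw [PiLp.norm_sq_eq_of_L2]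
    exact sum_dite_sub I _ _ (fun i h => by simp only [hX, PiLp.toLp_apply]; rw [dif_pos h])
      (fun i h => by simp only [hX, PiLp.toLp_apply]; rw [dif_neg h]; simp)
  have hnY : ‖Y‖ ^ 2 = ∑ j : J, ‖xJ j‖ ^ 2 := by
    rw [PiLp.norm_sq_eq_of_L2]
    exact sum_dite_sub J _ _ (fun i h => by simp only [hY, PiLp.toLp_apply]; rw [dif_pos h])
      (fun i h => by simp only [hY, PiLp.toLp_apply]; rw [dif_neg h]; simp)
  have hXQX : ⟪X, Q X⟫ = ∑ i : I, ∑ i' : I, ⟪xI i, Qblk ↑i ↑i' (xI i')⟫ := by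
    rw [PiLp.inner_apply]
    refine sum_dite_sub I _ _ (fun i h => ?_) (fun i h => ?_)
    · rw [hQblk, inner_sum]
      refine sum_dite_sub I _ _ (fun j hj => ?_) (fun j hj => ?_)
      · simp only [hX, PiLp.toLp_apply]; rw [dif_pos h, dif_pos hj]
      · simp only [hX, PiLp.toLp_apply]; rw [dif_neg hj]; simp
    · simp only [hX, PiLp.toLp_apply]; rw [dif_neg h]; simp
  have hXQY : ⟪X, Q Y⟫ = ∑ i : I, ∑ j : J, ⟪xI i, Qblk ↑i ↑j (xJ j)⟫ := by
    rw [PiLp.inner_apply]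
    refine sum_dite_sub I _ _ (fun i h => ?_) (fun i h => ?_)
    · rw [hQblk, inner_sum]
      refine sum_dite_sub J _ _ (fun j hj => ?_) (fun j hj => ?_)
      · simp only [hX, hY, PiLp.toLp_apply]; rw [dif_pos h, dif_pos hj]
      · simp only [hY, PiLp.toLp_apply]; rw [dif_neg hj]; simp
    · simp only [hX, PiLp.toLp_apply]; rw [dif_neg h]; simp
  have hYQX : ⟪Y, Q X⟫ = ∑ i : I, ∑ j : J, ⟪xJ j, Qblk ↑j ↑i (xI i)⟫ := by
    have h0 : ⟪Y, Q X⟫ = ∑ j : J, ∑ i : I, ⟪xJ j, Qblk ↑j ↑i (xI i)⟫ := by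
      rw [PiLp.inner_apply]
      refine sum_dite_sub J _ _ (fun j hj => ?_) (fun j hj => ?_)
      · rw [hQblk, inner_sum]
        refine sum_dite_sub I _ _ (fun i h => ?_) (fun i h => ?_)
        · simp only [hX, hY, PiLp.toLp_apply]; rw [dif_pos h, dif_pos hj]
        · simp only [hX, PiLp.toLp_apply]; rw [dif_neg h]; simp
      · simp only [hY, PiLp.toLp_apply]; rw [dif_neg hj]; simp
    rw [h0]
    exact Finset.sum_comm
  have hcross : (∑ i : I, ∑ j : J, (⟪xI i, Qblk ↑i ↑j (xJ j)⟫ + ⟪xJ j, Qblk ↑j ↑i (xI i)⟫))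
      = ⟪X, Q Y⟫ + ⟪Y, Q X⟫ := by
    rw [hXQY, hYQX, ← Finset.sum_add_distrib]
    exact Finset.sum_congr rfl fun i _ => by rw [← Finset.sum_add_distrib]
  have h1 : μ * ‖X‖ ^ 2 ≤ ⟪X, Q X⟫ := hQlb X
  have h2 : |⟪X, Q Y⟫| ≤ ‖X‖ * (M_Q * ‖Y‖) :=
    (abs_real_inner_le_norm X (Q Y)).trans
      (mul_le_mul_of_nonneg_left (hQub Y) (norm_nonneg X))
  have h3 : |⟪Y, Q X⟫| ≤ ‖Y‖ * (M_Q * ‖X‖) :=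
    (abs_real_inner_le_norm Y (Q X)).trans
      (mul_le_mul_of_nonneg_left (hQub X) (norm_nonneg Y))
  have hsX : Real.sqrt (∑ i : I, ‖xI i‖ ^ 2) = ‖X‖ := by
    rw [← hnX, Real.sqrt_sq (norm_nonneg X)]
  have hsY : Real.sqrt (∑ j : J, ‖xJ j‖ ^ 2) = ‖Y‖ := by
    rw [← hnY, Real.sqrt_sq (norm_nonneg Y)]
  rw [hcross, hsX, hsY, ← hnX, ← hXQX]
  nlinarith [abs_le.1 h2, abs_le.1 h3, h1]
set_option maxHeartbeats 1000000 in
/-- **Propagation of the perturbation (Lemma 4.2).**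
For the reduced optimal control problem on an index set `I` with externally
prescribed trajectories `x̂` on a disjoint index set `J`, the optimal solution
started at the zero initial condition satisfies
`‖x̃*_I‖_{L²} ≤ (2 M_Q/μ)·‖x̂_J‖_{L²}`. -/
theorem propagation_of_perturbation
    (s : ℕ) (hs : 1 ≤ s) (n m : Fin s → ℕ)
    -- the state cost matrix Q, symmetric and positive definite, with blocks Qblk
    (Q : PiLp 2 (fun i : Fin s => EuclideanSpace ℝ (Fin (n i))) →L[ℝ]
         PiLp 2 (fun i : Fin s => EuclideanSpace ℝ (Fin (n i))))
    (hQsymm : ∀ x y, ⟪x, Q y⟫ = ⟪Q x, y⟫)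
    (μ M_Q : ℝ) (hμ : 0 < μ) (hMQ : 0 < M_Q)
    (hQlb : ∀ x, μ * ‖x‖ ^ 2 ≤ ⟪x, Q x⟫)
    (hQub : ∀ x, ‖Q x‖ ≤ M_Q * ‖x‖)
    (Qblk : ∀ i j : Fin s, EuclideanSpace ℝ (Fin (n j)) →ₗ[ℝ] EuclideanSpace ℝ (Fin (n i)))
    (hQblk : ∀ x (i : Fin s), Q x i = ∑ j, Qblk i j (x j))
    -- the control cost blocks, symmetric positive semidefinite
    (Rblk : ∀ i : Fin s, EuclideanSpace ℝ (Fin (m i)) →ₗ[ℝ] EuclideanSpace ℝ (Fin (m i)))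
    (hRsymm : ∀ (i : Fin s) v w, ⟪v, Rblk i w⟫ = ⟪Rblk i v, w⟫)
    (hRpsd : ∀ (i : Fin s) v, 0 ≤ ⟪v, Rblk i v⟫)
    -- the decoupled dynamics
    (f : ∀ i : Fin s, EuclideanSpace ℝ (Fin (n i)) × EuclideanSpace ℝ (Fin (m i)) →
          EuclideanSpace ℝ (Fin (n i)))
    (hf_cont : ∀ i, Continuous (f i))
    (hf0 : ∀ i, f i (0, 0) = 0)
    -- disjoint index sets I and J
    (I J : Finset (Fin s)) (hIJ : Disjoint I J)
    -- the prescribed trajectories x̂ on J, measurable with finite L²-norm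
    (xhat : ℝ → ∀ j : J, EuclideanSpace ℝ (Fin (n ↑j)))
    (hxhat_meas : Measurable xhat)
    (hxhat_L2 : (∫⁻ t in Set.Ioi (0:ℝ),
        ENNReal.ofReal (∑ j : J, ‖xhat t j‖ ^ 2)) < ⊤)
    -- the reduced running cost ℓ_I
    (ellI : (∀ i : I, EuclideanSpace ℝ (Fin (n ↑i))) →
            (∀ i : I, EuclideanSpace ℝ (Fin (m ↑i))) →
            (∀ j : J, EuclideanSpace ℝ (Fin (n ↑j))) → ℝ)
    (hellI : ∀ xI uI xJ, ellI xI uI xJ =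
      (∑ i : I, ∑ j : J, (⟪xI i, Qblk ↑i ↑j (xJ j)⟫ + ⟪xJ j, Qblk ↑j ↑i (xI i)⟫)) +
      (∑ i : I, ∑ i' : I, ⟪xI i, Qblk ↑i ↑i' (xI i')⟫) +
      (∑ i : I, ⟪uI i, Rblk ↑i (uI i)⟫))
    -- the optimal reduced admissible pair (x̃*, ũ*) from the zero initial condition
    (xt : ℝ → ∀ i : I, EuclideanSpace ℝ (Fin (n ↑i)))
    (ut : ℝ → ∀ i : I, EuclideanSpace ℝ (Fin (m ↑i)))
    (hxt_cont : ∀ i : I, ContinuousOn (fun t => xt t i) (Set.Ici 0))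
    (hut_meas : ∀ i : I, Measurable fun t => ut t i)
    (hxt_init : ∀ i : I, xt 0 i = 0)
    (hxt_ode : ∀ (i : I), ∀ t ≥ (0:ℝ),
      HasDerivAt (fun τ => xt τ i) (f ↑i (xt t i, ut t i)) t)
    (hxt_int : IntegrableOn (fun t => ellI (xt t) (ut t) (xhat t)) (Set.Ioi 0))
    (hopt : ∀ (x : ℝ → ∀ i : I, EuclideanSpace ℝ (Fin (n ↑i)))
              (u : ℝ → ∀ i : I, EuclideanSpace ℝ (Fin (m ↑i))),
      (∀ i : I, ContinuousOn (fun t => x t i) (Set.Ici 0)) →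
      (∀ i : I, Measurable fun t => u t i) →
      (∀ i : I, x 0 i = 0) →
      (∀ (i : I), ∀ t ≥ (0:ℝ),
        HasDerivAt (fun τ => x τ i) (f ↑i (x t i, u t i)) t) →
      IntegrableOn (fun t => ellI (x t) (u t) (xhat t)) (Set.Ioi 0) →
      (∫ t in Set.Ioi (0:ℝ), ellI (xt t) (ut t) (xhat t)) ≤
        ∫ t in Set.Ioi (0:ℝ), ellI (x t) (u t) (xhat t)) :
    (∫⁻ t in Set.Ioi (0:ℝ),
        ENNReal.ofReal (∑ i : I, ‖xt t i‖ ^ 2)) ^ ((1:ℝ)/2) ≤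
      ENNReal.ofReal (2 * M_Q / μ) *
        (∫⁻ t in Set.Ioi (0:ℝ),
          ENNReal.ofReal (∑ j : J, ‖xhat t j‖ ^ 2)) ^ ((1:ℝ)/2) := by
  classical
  have hA2nonneg : ∀ t : ℝ, (0:ℝ) ≤ ∑ i : I, ‖xt t i‖ ^ 2 := fun t =>
    Finset.sum_nonneg fun i _ => sq_nonneg _
  have hB2nonneg : ∀ t : ℝ, (0:ℝ) ≤ ∑ j : J, ‖xhat t j‖ ^ 2 := fun t =>
    Finset.sum_nonneg fun j _ => sq_nonneg _
  -- pointwise quadratic lower bound for the running cost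
  have key : ∀ t : ℝ, μ * (∑ i : I, ‖xt t i‖ ^ 2) -
      2 * M_Q * (Real.sqrt (∑ i : I, ‖xt t i‖ ^ 2) *
        Real.sqrt (∑ j : J, ‖xhat t j‖ ^ 2)) ≤
      ellI (xt t) (ut t) (xhat t) := by
    intro t
    have h := key_quad Q hQlb hQub Qblk hQblk I J (xt t) (xhat t)
    have hR : (0:ℝ) ≤ ∑ i : I, ⟪ut t i, Rblk ↑i (ut t i)⟫ :=
      Finset.sum_nonneg fun i _ => hRpsd ↑i (ut t i)
    rw [hellI]
    linarith
  -- the optimal cost is at most the cost of the zero pair, which is zero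
  have hcost0 : ∀ t : ℝ, ellI (fun _ => 0) (fun _ => 0) (xhat t) = 0 := by
    intro t; rw [hellI]; simp
  have hle0 : (∫ t in Set.Ioi (0:ℝ), ellI (xt t) (ut t) (xhat t)) ≤ 0 := by
    have h := hopt (fun _ _ => 0) (fun _ _ => 0)
      (fun i => continuousOn_const) (fun i => measurable_const) (fun i => rfl)
      (fun i t ht => by
        have hd : HasDerivAt (fun _ : ℝ => (0 : EuclideanSpace ℝ (Fin (n ↑i))))
            (f ↑i (0, 0)) t := by
          rw [hf0]; exact hasDerivAt_const _ _
        exact hd)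
      (by simp only [hcost0]; exact integrableOn_zero)
    simpa [hcost0] using h
  -- measurability
  have haem : AEMeasurable (fun t => ∑ i : I, ‖xt t i‖ ^ 2)
      (volume.restrict (Set.Ioi (0:ℝ))) := by
    have hc : ContinuousOn (fun t => ∑ i : I, ‖xt t i‖ ^ 2) (Set.Ioi (0:ℝ)) := by
      refine continuousOn_finset_sum _ fun i _ => ?_
      exact (((hxt_cont i).mono Set.Ioi_subset_Ici_self).norm).pow 2
    exact hc.aemeasurable measurableSet_Ioi
  have hbmeas : Measurable (fun t => ∑ j : J, ‖xhat t j‖ ^ 2) :=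
    Finset.measurable_sum _ fun j _ =>
      (((measurable_pi_apply j).comp hxhat_meas).norm).pow_const 2
  have haem_a : AEMeasurable (fun t => Real.sqrt (∑ i : I, ‖xt t i‖ ^ 2))
      (volume.restrict (Set.Ioi (0:ℝ))) :=
    Real.continuous_sqrt.measurable.comp_aemeasurable haem
  have hmeas_b : Measurable (fun t => Real.sqrt (∑ j : J, ‖xhat t j‖ ^ 2)) :=
    Real.continuous_sqrt.measurable.comp hbmeas
  -- integrability of the three relevant functions
  have hB2int : IntegrableOn (fun t => ∑ j : J, ‖xhat t j‖ ^ 2) (Set.Ioi 0) := by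
    refine ⟨hbmeas.aestronglyMeasurable, ?_⟩
    rw [hasFiniteIntegral_iff_ofReal (Filter.Eventually.of_forall fun t => hB2nonneg t)]
    exact hxhat_L2
  have hgint : IntegrableOn (fun t =>
      (2 * μ * ellI (xt t) (ut t) (xhat t) +
        4 * M_Q ^ 2 * (∑ j : J, ‖xhat t j‖ ^ 2)) / μ ^ 2) (Set.Ioi 0) :=
    ((hxt_int.const_mul (2 * μ)).add (hB2int.const_mul (4 * M_Q ^ 2))).div_const (μ ^ 2)
  have hA2int : IntegrableOn (fun t => ∑ i : I, ‖xt t i‖ ^ 2) (Set.Ioi 0) := by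
    refine Integrable.mono' hgint haem.aestronglyMeasurable ?_
    refine Filter.Eventually.of_forall fun t => ?_
    rw [Real.norm_eq_abs, abs_of_nonneg (hA2nonneg t), le_div_iff₀ (by positivity)]
    have hk := key t
    have ha2 : (Real.sqrt (∑ i : I, ‖xt t i‖ ^ 2)) ^ 2 = ∑ i : I, ‖xt t i‖ ^ 2 :=
      Real.sq_sqrt (hA2nonneg t)
    have hb2 : (Real.sqrt (∑ j : J, ‖xhat t j‖ ^ 2)) ^ 2 = ∑ j : J, ‖xhat t j‖ ^ 2 :=
      Real.sq_sqrt (hB2nonneg t)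
    nlinarith [sq_nonneg (μ * Real.sqrt (∑ i : I, ‖xt t i‖ ^ 2) -
        2 * M_Q * Real.sqrt (∑ j : J, ‖xhat t j‖ ^ 2)),
      mul_le_mul_of_nonneg_left hk hμ.le]
  have hg2int : IntegrableOn (fun t =>
      ((∑ i : I, ‖xt t i‖ ^ 2) + (∑ j : J, ‖xhat t j‖ ^ 2)) / 2) (Set.Ioi 0) :=
    (hA2int.add hB2int).div_const 2
  have hABint : IntegrableOn (fun t => Real.sqrt (∑ i : I, ‖xt t i‖ ^ 2) *
      Real.sqrt (∑ j : J, ‖xhat t j‖ ^ 2)) (Set.Ioi 0) := by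
    refine Integrable.mono' hg2int
      (haem_a.mul hmeas_b.aemeasurable).aestronglyMeasurable ?_
    refine Filter.Eventually.of_forall fun t => ?_
    rw [Real.norm_eq_abs,
      abs_of_nonneg (mul_nonneg (Real.sqrt_nonneg _) (Real.sqrt_nonneg _)),
      le_div_iff₀ (by norm_num : (0:ℝ) < 2)]
    have ha2 : (Real.sqrt (∑ i : I, ‖xt t i‖ ^ 2)) ^ 2 = ∑ i : I, ‖xt t i‖ ^ 2 :=
      Real.sq_sqrt (hA2nonneg t)
    have hb2 : (Real.sqrt (∑ j : J, ‖xhat t j‖ ^ 2)) ^ 2 = ∑ j : J, ‖xhat t j‖ ^ 2 :=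
      Real.sq_sqrt (hB2nonneg t)
    nlinarith [sq_nonneg (Real.sqrt (∑ i : I, ‖xt t i‖ ^ 2) -
        Real.sqrt (∑ j : J, ‖xhat t j‖ ^ 2))]
  -- integral form of the quadratic bound
  have hmono : μ * (∫ t in Set.Ioi (0:ℝ), ∑ i : I, ‖xt t i‖ ^ 2) ≤
      2 * M_Q * (∫ t in Set.Ioi (0:ℝ), Real.sqrt (∑ i : I, ‖xt t i‖ ^ 2) *
        Real.sqrt (∑ j : J, ‖xhat t j‖ ^ 2)) := by
    have h1 : (∫ t in Set.Ioi (0:ℝ), μ * (∑ i : I, ‖xt t i‖ ^ 2)) ≤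
        ∫ t in Set.Ioi (0:ℝ), (ellI (xt t) (ut t) (xhat t) +
          2 * M_Q * (Real.sqrt (∑ i : I, ‖xt t i‖ ^ 2) *
            Real.sqrt (∑ j : J, ‖xhat t j‖ ^ 2))) := by
      refine integral_mono (hA2int.const_mul μ)
        (hxt_int.add (hABint.const_mul (2 * M_Q))) fun t => ?_
      have := key t
      dsimp only
      linarith
    rw [integral_const_mul, integral_add hxt_int (hABint.const_mul (2 * M_Q)),
      integral_const_mul] at h1
    linarith
  have hα0 : 0 ≤ ∫ t in Set.Ioi (0:ℝ), ∑ i : I, ‖xt t i‖ ^ 2 :=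
    setIntegral_nonneg measurableSet_Ioi fun t _ => hA2nonneg t
  have hβ0 : 0 ≤ ∫ t in Set.Ioi (0:ℝ), ∑ j : J, ‖xhat t j‖ ^ 2 :=
    setIntegral_nonneg measurableSet_Ioi fun t _ => hB2nonneg t
  -- lintegral/integral conversions
  have hLA : (∫⁻ t in Set.Ioi (0:ℝ), ENNReal.ofReal (∑ i : I, ‖xt t i‖ ^ 2)) =
      ENNReal.ofReal (∫ t in Set.Ioi (0:ℝ), ∑ i : I, ‖xt t i‖ ^ 2) :=
    (ofReal_integral_eq_lintegral_ofReal hA2int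
      (Filter.Eventually.of_forall fun t => hA2nonneg t)).symm
  have hLB : (∫⁻ t in Set.Ioi (0:ℝ), ENNReal.ofReal (∑ j : J, ‖xhat t j‖ ^ 2)) =
      ENNReal.ofReal (∫ t in Set.Ioi (0:ℝ), ∑ j : J, ‖xhat t j‖ ^ 2) :=
    (ofReal_integral_eq_lintegral_ofReal hB2int
      (Filter.Eventually.of_forall fun t => hB2nonneg t)).symm
  have hLC : (∫⁻ t in Set.Ioi (0:ℝ), ENNReal.ofReal (Real.sqrt (∑ i : I, ‖xt t i‖ ^ 2) *
      Real.sqrt (∑ j : J, ‖xhat t j‖ ^ 2))) =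
      ENNReal.ofReal (∫ t in Set.Ioi (0:ℝ), Real.sqrt (∑ i : I, ‖xt t i‖ ^ 2) *
        Real.sqrt (∑ j : J, ‖xhat t j‖ ^ 2)) :=
    (ofReal_integral_eq_lintegral_ofReal hABint
      (Filter.Eventually.of_forall fun t =>
        mul_nonneg (Real.sqrt_nonneg _) (Real.sqrt_nonneg _))).symm
  -- Hölder (Cauchy–Schwarz) for the lintegral
  have hCS : (∫⁻ t in Set.Ioi (0:ℝ), ENNReal.ofReal (Real.sqrt (∑ i : I, ‖xt t i‖ ^ 2) *
      Real.sqrt (∑ j : J, ‖xhat t j‖ ^ 2))) ≤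
      (∫⁻ t in Set.Ioi (0:ℝ), ENNReal.ofReal (∑ i : I, ‖xt t i‖ ^ 2)) ^ ((1:ℝ)/2) *
      (∫⁻ t in Set.Ioi (0:ℝ), ENNReal.ofReal (∑ j : J, ‖xhat t j‖ ^ 2)) ^ ((1:ℝ)/2) := by
    have hconj : Real.HolderConjugate 2 2 := Real.HolderConjugate.two_two
    have h := ENNReal.lintegral_mul_le_Lp_mul_Lq (volume.restrict (Set.Ioi (0:ℝ))) hconj
      (f := fun t => ENNReal.ofReal (Real.sqrt (∑ i : I, ‖xt t i‖ ^ 2)))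
      (g := fun t => ENNReal.ofReal (Real.sqrt (∑ j : J, ‖xhat t j‖ ^ 2)))
      (ENNReal.measurable_ofReal.comp_aemeasurable haem_a)
      (ENNReal.measurable_ofReal.comp_aemeasurable hmeas_b.aemeasurable)
    have hf2 : ∀ t : ℝ, ENNReal.ofReal (Real.sqrt (∑ i : I, ‖xt t i‖ ^ 2)) ^ (2:ℝ) =
        ENNReal.ofReal (∑ i : I, ‖xt t i‖ ^ 2) := by
      intro t
      rw [ENNReal.ofReal_rpow_of_nonneg (Real.sqrt_nonneg _) (by norm_num : (0:ℝ) ≤ 2)]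
      congr 1
      rw [show ((2:ℝ)) = ((2:ℕ):ℝ) by norm_num, Real.rpow_natCast,
        Real.sq_sqrt (hA2nonneg t)]
    have hg2 : ∀ t : ℝ, ENNReal.ofReal (Real.sqrt (∑ j : J, ‖xhat t j‖ ^ 2)) ^ (2:ℝ) =
        ENNReal.ofReal (∑ j : J, ‖xhat t j‖ ^ 2) := by
      intro t
      rw [ENNReal.ofReal_rpow_of_nonneg (Real.sqrt_nonneg _) (by norm_num : (0:ℝ) ≤ 2)]
      congr 1
      rw [show ((2:ℝ)) = ((2:ℕ):ℝ) by norm_num, Real.rpow_natCast,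
        Real.sq_sqrt (hB2nonneg t)]
    simp only [Pi.mul_apply, hf2, hg2] at h
    calc (∫⁻ t in Set.Ioi (0:ℝ), ENNReal.ofReal (Real.sqrt (∑ i : I, ‖xt t i‖ ^ 2) *
          Real.sqrt (∑ j : J, ‖xhat t j‖ ^ 2)))
        = ∫⁻ t in Set.Ioi (0:ℝ), ENNReal.ofReal (Real.sqrt (∑ i : I, ‖xt t i‖ ^ 2)) *
            ENNReal.ofReal (Real.sqrt (∑ j : J, ‖xhat t j‖ ^ 2)) := by
          refine lintegral_congr fun t => ?_
          exact ENNReal.ofReal_mul (Real.sqrt_nonneg _)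
      _ ≤ _ := h
  -- real-valued Cauchy–Schwarz
  have hγle : (∫ t in Set.Ioi (0:ℝ), Real.sqrt (∑ i : I, ‖xt t i‖ ^ 2) *
      Real.sqrt (∑ j : J, ‖xhat t j‖ ^ 2)) ≤
      Real.sqrt (∫ t in Set.Ioi (0:ℝ), ∑ i : I, ‖xt t i‖ ^ 2) *
      Real.sqrt (∫ t in Set.Ioi (0:ℝ), ∑ j : J, ‖xhat t j‖ ^ 2) := by
    rw [hLC, hLA, hLB, ENNReal.ofReal_rpow_of_nonneg hα0 (by norm_num),
      ENNReal.ofReal_rpow_of_nonneg hβ0 (by norm_num), ← Real.sqrt_eq_rpow,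
      ← Real.sqrt_eq_rpow, ← ENNReal.ofReal_mul (Real.sqrt_nonneg _)] at hCS
    exact (ENNReal.ofReal_le_ofReal_iff
      (mul_nonneg (Real.sqrt_nonneg _) (Real.sqrt_nonneg _))).mp hCS
  -- finish in ℝ
  have hfinal : Real.sqrt (∫ t in Set.Ioi (0:ℝ), ∑ i : I, ‖xt t i‖ ^ 2) ≤
      2 * M_Q / μ * Real.sqrt (∫ t in Set.Ioi (0:ℝ), ∑ j : J, ‖xhat t j‖ ^ 2) := by
    set α := ∫ t in Set.Ioi (0:ℝ), ∑ i : I, ‖xt t i‖ ^ 2 with hαdef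
    set β := ∫ t in Set.Ioi (0:ℝ), ∑ j : J, ‖xhat t j‖ ^ 2 with hβdef
    have hαs : Real.sqrt α * Real.sqrt α = α := Real.mul_self_sqrt hα0
    rcases (Real.sqrt_nonneg α).eq_or_lt with h | h
    · rw [← h]
      positivity
    · have h2 : μ * (Real.sqrt α * Real.sqrt α) ≤
          2 * M_Q * (Real.sqrt α * Real.sqrt β) := by
        rw [hαs]
        refine hmono.trans ?_
        have := hγle
        nlinarith [hMQ]
      have h2' : μ * Real.sqrt α * Real.sqrt α ≤
          2 * M_Q * Real.sqrt β * Real.sqrt α := by nlinarith [h2]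
      have h3 : μ * Real.sqrt α ≤ 2 * M_Q * Real.sqrt β :=
        le_of_mul_le_mul_right h2' h
      rw [div_mul_eq_mul_div, le_div_iff₀ hμ]
      linarith
  rw [hLA, hLB, ENNReal.ofReal_rpow_of_nonneg hα0 (by norm_num),
    ENNReal.ofReal_rpow_of_nonneg hβ0 (by norm_num), ← Real.sqrt_eq_rpow,
    ← Real.sqrt_eq_rpow, ← ENNReal.ofReal_mul (by positivity)]
  exact ENNReal.ofReal_le_ofReal hfinal
end

section
/- Let E be a finite-dimensional real inner product space and Q : E →L[ℝ] E symmetric with μ‖v‖² ≤ ⟪v, Q v⟫ and ‖Q v‖ ≤ M_Q‖v‖ for all v ∈ E, where μ, M_Q > 0. Let f, g : [0,∞) → E be measurable with ∫₀^∞ ‖g(t)‖² dt < ∞, such that the function t ↦ ⟪f(t), Q g(t)⟫ + ⟪g(t), Q f(t)⟫ + ⟪f(t), Q f(t)⟫ is Lebesgue integrable with ∫₀^∞ (⟪f(t), Q g(t)⟫ + ⟪g(t), Q f(t)⟫ + ⟪f(t), Q f(t)⟫) dt ≤ 0. Then f is square-integrable and (∫₀^∞ ‖f(t)‖² dt)^{1/2}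 ≤ (2·M_Q/μ) · (∫₀^∞ ‖g(t)‖² dt)^{1/2}. -/
open scoped RealInnerProductSpace ENNReal
open MeasureTheory

/-- **Abstract version of Lemma 4.2.**
If `∫₀^∞ (⟪f, Q g⟫ + ⟪g, Q f⟫ + ⟪f, Q f⟫) dt ≤ 0` for a symmetric `Q` with
`μ‖v‖² ≤ ⟪v, Q v⟫` and `‖Q v‖ ≤ M_Q ‖v‖`, and `g ∈ L²`, then `f ∈ L²` with
`‖f‖_{L²} ≤ (2 M_Q / μ)·‖g‖_{L²}`. -/
theorem L2_bound_from_nonpositive_mixed_quadratic_integral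
    {E : Type*}
    [NormedAddCommGroup E] [InnerProductSpace ℝ E] [FiniteDimensional ℝ E]
    [MeasurableSpace E] [BorelSpace E]
    (Q : E →L[ℝ] E)
    (hQsymm : ∀ v w : E, ⟪v, Q w⟫ = ⟪Q v, w⟫)
    (μ M_Q : ℝ) (hμ : 0 < μ) (hMQ : 0 < M_Q)
    (hQlb : ∀ v : E, μ * ‖v‖ ^ 2 ≤ ⟪v, Q v⟫)
    (hQub : ∀ v : E, ‖Q v‖ ≤ M_Q * ‖v‖)
    (f g : ℝ → E)
    (hf_meas : Measurable f) (hg_meas : Measurable g)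
    (hg_L2 : (∫⁻ t in Set.Ioi (0:ℝ), ENNReal.ofReal (‖g t‖ ^ 2)) < ⊤)
    (h_int : IntegrableOn
      (fun t => ⟪f t, Q (g t)⟫ + ⟪g t, Q (f t)⟫ + ⟪f t, Q (f t)⟫) (Set.Ioi 0))
    (h_nonpos :
      (∫ t in Set.Ioi (0:ℝ),
        (⟪f t, Q (g t)⟫ + ⟪g t, Q (f t)⟫ + ⟪f t, Q (f t)⟫)) ≤ 0) :
    (∫⁻ t in Set.Ioi (0:ℝ), ENNReal.ofReal (‖f t‖ ^ 2)) < ⊤ ∧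
      (∫⁻ t in Set.Ioi (0:ℝ), ENNReal.ofReal (‖f t‖ ^ 2)) ^ ((1:ℝ)/2) ≤
        ENNReal.ofReal (2 * M_Q / μ) *
          (∫⁻ t in Set.Ioi (0:ℝ), ENNReal.ofReal (‖g t‖ ^ 2)) ^ ((1:ℝ)/2) := by
  set S : ℝ → ℝ := fun t => ⟪f t, Q (g t)⟫ + ⟪g t, Q (f t)⟫ + ⟪f t, Q (f t)⟫ with hS
  clear_value S
  -- measurability
  have hQg : Measurable fun t => Q (g t) := Q.continuous.measurable.comp hg_meas
  have hQf : Measurable fun t => Q (f t) := Q.continuous.measurable.comp hf_meas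
  have hfg_meas : Measurable fun t => ⟪f t, Q (g t)⟫ := hf_meas.inner hQg
  have hff_meas : Measurable fun t => ⟪f t, Q (f t)⟫ := hf_meas.inner hQf
  have hS_meas : Measurable S := by
    rw [hS]; exact ((hfg_meas.add (hg_meas.inner hQf)).add hff_meas)
  have hnf : Measurable fun t => ‖f t‖ ^ 2 := (hf_meas.norm.pow_const 2)
  have hng : Measurable fun t => ‖g t‖ ^ 2 := (hg_meas.norm.pow_const 2)
  -- symmetry rewriting
  have hsymm : ∀ t, ⟪g t, Q (f t)⟫ = ⟪f t, Q (g t)⟫ := fun t => by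
    rw [hQsymm, real_inner_comm]
  -- cross term bound
  have hcross : ∀ t, |⟪f t, Q (g t)⟫| ≤ M_Q * (‖f t‖ * ‖g t‖) := fun t => by
    calc |⟪f t, Q (g t)⟫| ≤ ‖f t‖ * ‖Q (g t)‖ := abs_real_inner_le_norm _ _
    _ ≤ ‖f t‖ * (M_Q * ‖g t‖) := by
        exact mul_le_mul_of_nonneg_left (hQub _) (norm_nonneg _)
    _ = M_Q * (‖f t‖ * ‖g t‖) := by ring
  -- Young-type bound
  have hyoung : ∀ t, 2 * |⟪f t, Q (g t)⟫| ≤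
      (μ/2) * ‖f t‖ ^ 2 + (2 * M_Q ^ 2 / μ) * ‖g t‖ ^ 2 := fun t => by
    have h1 := hcross t
    have h2 : 2 * (M_Q * (‖f t‖ * ‖g t‖)) ≤
        (μ/2) * ‖f t‖ ^ 2 + (2 * M_Q ^ 2 / μ) * ‖g t‖ ^ 2 := by
      have key : (μ/2) * ‖f t‖ ^ 2 + (2 * M_Q ^ 2 / μ) * ‖g t‖ ^ 2
          - 2 * (M_Q * (‖f t‖ * ‖g t‖))
          = (μ * ‖f t‖ - 2 * M_Q * ‖g t‖)^2 / (2 * μ) := by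
        field_simp
        ring
      have hpos : (0:ℝ) ≤ (μ * ‖f t‖ - 2 * M_Q * ‖g t‖)^2 / (2 * μ) := by positivity
      linarith
    linarith
  -- pointwise bound for ‖f‖²
  have hpt : ∀ t, ‖f t‖ ^ 2 ≤ (2/μ) * S t + (4 * M_Q ^ 2 / μ ^ 2) * ‖g t‖ ^ 2 := by
    intro t
    have h1 := hQlb (f t)
    have h2 : ⟪f t, Q (f t)⟫ = S t - 2 * ⟪f t, Q (g t)⟫ := by
      simp only [hS, hsymm t]; ring
    have h3 : -(2 * ⟪f t, Q (g t)⟫) ≤ 2 * |⟪f t, Q (g t)⟫| := by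
      have := neg_abs_le (⟪f t, Q (g t)⟫); linarith
    have h4 := hyoung t
    rw [h2] at h1
    have hμ2 : μ * ‖f t‖ ^ 2 ≤ S t + (μ/2) * ‖f t‖ ^ 2 + (2 * M_Q ^ 2 / μ) * ‖g t‖ ^ 2 := by
      linarith
    have h5 : (μ/2) * ‖f t‖ ^ 2 ≤ S t + (2 * M_Q ^ 2 / μ) * ‖g t‖ ^ 2 := by linarith
    have hμ' : (0:ℝ) < μ/2 := by linarith
    rw [← sub_nonneg]
    have key : (2/μ) * S t + (4 * M_Q ^ 2 / μ ^ 2) * ‖g t‖ ^ 2 - ‖f t‖ ^ 2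
        = (2/μ) * (S t + (2 * M_Q ^ 2 / μ) * ‖g t‖ ^ 2 - (μ/2) * ‖f t‖ ^ 2) := by
      field_simp; ring
    rw [key]
    have : (0:ℝ) ≤ 2/μ := by positivity
    nlinarith
  -- finiteness of lintegral of ‖f‖²
  have hfin : (∫⁻ t in Set.Ioi (0:ℝ), ENNReal.ofReal (‖f t‖ ^ 2)) < ⊤ := by
    have hb : ∀ t, ENNReal.ofReal (‖f t‖ ^ 2) ≤
        ENNReal.ofReal ((2/μ) * |S t|) + ENNReal.ofReal ((4 * M_Q ^ 2 / μ ^ 2) * ‖g t‖ ^ 2) := by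
      intro t
      calc ENNReal.ofReal (‖f t‖ ^ 2)
          ≤ ENNReal.ofReal ((2/μ) * |S t| + (4 * M_Q ^ 2 / μ ^ 2) * ‖g t‖ ^ 2) := by
            apply ENNReal.ofReal_le_ofReal
            have := hpt t
            have h2 : (2/μ) * S t ≤ (2/μ) * |S t| := by
              have := le_abs_self (S t)
              have h0 : (0:ℝ) ≤ 2/μ := by positivity
              exact mul_le_mul_of_nonneg_left this h0
            linarith
        _ ≤ _ := ENNReal.ofReal_add_le
    calc (∫⁻ t in Set.Ioi (0:ℝ), ENNReal.ofReal (‖f t‖ ^ 2))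
        ≤ ∫⁻ t in Set.Ioi (0:ℝ), (ENNReal.ofReal ((2/μ) * |S t|)
            + ENNReal.ofReal ((4 * M_Q ^ 2 / μ ^ 2) * ‖g t‖ ^ 2)) :=
          lintegral_mono (fun t => hb t)
      _ = (∫⁻ t in Set.Ioi (0:ℝ), ENNReal.ofReal ((2/μ) * |S t|))
            + ∫⁻ t in Set.Ioi (0:ℝ), ENNReal.ofReal ((4 * M_Q ^ 2 / μ ^ 2) * ‖g t‖ ^ 2) := by
          apply lintegral_add_left
          exact (measurable_const.mul hS_meas.abs).ennreal_ofReal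
      _ < ⊤ := by
          apply ENNReal.add_lt_top.2
          constructor
          · have : ∀ t, ENNReal.ofReal ((2/μ) * |S t|)
                = ENNReal.ofReal (2/μ) * ENNReal.ofReal |S t| := fun t =>
              ENNReal.ofReal_mul (by positivity)
            simp only [this]
            have := h_int.2
            rw [hasFiniteIntegral_iff_norm] at this

            have heq : ∀ t, ENNReal.ofReal |S t| = ENNReal.ofReal ‖S t‖ := fun t => by
              rw [Real.norm_eq_abs]
            rw [lintegral_const_mul _ hS_meas.abs.ennreal_ofReal]
            simp only [heq]
            exact ENNReal.mul_lt_top ENNReal.ofReal_lt_top this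
          · have : ∀ t, ENNReal.ofReal ((4 * M_Q ^ 2 / μ ^ 2) * ‖g t‖ ^ 2)
                = ENNReal.ofReal (4 * M_Q ^ 2 / μ ^ 2) * ENNReal.ofReal (‖g t‖ ^ 2) := fun t =>
              ENNReal.ofReal_mul (by positivity)
            simp only [this]
            rw [lintegral_const_mul _ hng.ennreal_ofReal]
            exact ENNReal.mul_lt_top ENNReal.ofReal_lt_top hg_L2
  refine ⟨hfin, ?_⟩
  -- Part 2: real integral argument
  have hf_nn : 0 ≤ᵐ[volume.restrict (Set.Ioi (0:ℝ))] fun t => ‖f t‖ ^ 2 :=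
    Filter.Eventually.of_forall fun t => by positivity
  have hg_nn : 0 ≤ᵐ[volume.restrict (Set.Ioi (0:ℝ))] fun t => ‖g t‖ ^ 2 :=
    Filter.Eventually.of_forall fun t => by positivity
  have hf2_int : IntegrableOn (fun t => ‖f t‖ ^ 2) (Set.Ioi 0) :=
    ⟨hnf.aestronglyMeasurable, (hasFiniteIntegral_iff_ofReal hf_nn).2 hfin⟩
  have hg2_int : IntegrableOn (fun t => ‖g t‖ ^ 2) (Set.Ioi 0) :=
    ⟨hng.aestronglyMeasurable, (hasFiniteIntegral_iff_ofReal hg_nn).2 hg_L2⟩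
  have hfg_int : IntegrableOn (fun t => ⟪f t, Q (g t)⟫) (Set.Ioi 0) := by
    refine Integrable.mono ((hf2_int.add hg2_int).const_mul (M_Q/2))
      hfg_meas.aestronglyMeasurable (Filter.Eventually.of_forall fun t => ?_)
    have h1 := hcross t
    have h2 : ‖f t‖ * ‖g t‖ ≤ (‖f t‖ ^ 2 + ‖g t‖ ^ 2) / 2 := by
      nlinarith [sq_nonneg (‖f t‖ - ‖g t‖)]
    have h3 : (0:ℝ) ≤ M_Q / 2 * (‖f t‖ ^ 2 + ‖g t‖ ^ 2) := by positivity
    simp only [Pi.add_apply, Real.norm_eq_abs]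
    rw [abs_of_nonneg h3]
    nlinarith
  have hff_int : IntegrableOn (fun t => ⟪f t, Q (f t)⟫) (Set.Ioi 0) := by
    have : (fun t => ⟪f t, Q (f t)⟫) = fun t => S t - 2 * ⟪f t, Q (g t)⟫ := by
      funext t; simp only [hS, hsymm t]; ring
    rw [this]
    exact h_int.sub (hfg_int.const_mul 2)
  set If := ∫ t in Set.Ioi (0:ℝ), ‖f t‖ ^ 2 with hIf
  set Ig := ∫ t in Set.Ioi (0:ℝ), ‖g t‖ ^ 2 with hIg
  have hIf_nonneg : 0 ≤ If := integral_nonneg fun t => by positivity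
  have hIg_nonneg : 0 ≤ Ig := integral_nonneg fun t => by positivity
  -- μ If ≤ ∫ ⟪f, Qf⟫
  have step1 : μ * If ≤ ∫ t in Set.Ioi (0:ℝ), ⟪f t, Q (f t)⟫ := by
    rw [hIf, ← integral_const_mul]
    exact integral_mono (hf2_int.const_mul μ) hff_int fun t => hQlb (f t)
  -- ∫ ⟪f, Qf⟫ = ∫ S - 2 ∫ ⟪f, Qg⟫
  have step2 : (∫ t in Set.Ioi (0:ℝ), ⟪f t, Q (f t)⟫)
      = (∫ t in Set.Ioi (0:ℝ), S t) - 2 * ∫ t in Set.Ioi (0:ℝ), ⟪f t, Q (g t)⟫ := by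
    rw [← integral_const_mul, ← integral_sub h_int (hfg_int.const_mul 2)]
    congr 1; funext t; simp only [hS, hsymm t]; ring
  -- bound on 2 ∫ |⟪f, Qg⟫|
  have step3 : 2 * (∫ t in Set.Ioi (0:ℝ), |⟪f t, Q (g t)⟫|)
      ≤ (μ/2) * If + (2 * M_Q ^ 2 / μ) * Ig := by
    rw [hIf, hIg, ← integral_const_mul, ← integral_const_mul, ← integral_const_mul,
      ← integral_add ((hf2_int.const_mul _)) ((hg2_int.const_mul _))]
    exact integral_mono (hfg_int.abs.const_mul 2)
      ((hf2_int.const_mul _).add (hg2_int.const_mul _)) fun t => hyoung t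
  have step4 : -(2 * ∫ t in Set.Ioi (0:ℝ), ⟪f t, Q (g t)⟫)
      ≤ 2 * ∫ t in Set.Ioi (0:ℝ), |⟪f t, Q (g t)⟫| := by
    have h1 : |∫ t in Set.Ioi (0:ℝ), ⟪f t, Q (g t)⟫|
        ≤ ∫ t in Set.Ioi (0:ℝ), |⟪f t, Q (g t)⟫| := by
      simpa [Real.norm_eq_abs] using
        norm_integral_le_integral_norm (μ := volume.restrict (Set.Ioi (0:ℝ)))
          (fun t => ⟪f t, Q (g t)⟫)
    have h2 := neg_abs_le (∫ t in Set.Ioi (0:ℝ), ⟪f t, Q (g t)⟫)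
    linarith
  have key : μ * If ≤ (μ/2) * If + (2 * M_Q ^ 2 / μ) * Ig := by
    have := step1
    rw [step2] at this
    linarith
  have hIf_le : If ≤ (2 * M_Q / μ) ^ 2 * Ig := by
    have h1 : (μ/2) * If ≤ (2 * M_Q ^ 2 / μ) * Ig := by linarith
    have h2 : If ≤ (2/μ) * ((2 * M_Q ^ 2 / μ) * Ig) := by
      rw [← sub_nonneg]
      have : (2/μ) * ((2 * M_Q ^ 2 / μ) * Ig) - If
          = (2/μ) * ((2 * M_Q ^ 2 / μ) * Ig - (μ/2) * If) := by
        field_simp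
      rw [this]
      have h3 : (0:ℝ) ≤ 2/μ := by positivity
      nlinarith
    calc If ≤ (2/μ) * ((2 * M_Q ^ 2 / μ) * Ig) := h2
      _ = (2 * M_Q / μ) ^ 2 * Ig := by field_simp
  have hreal : If ^ ((1:ℝ)/2) ≤ (2 * M_Q / μ) * Ig ^ ((1:ℝ)/2) := by
    rw [← Real.sqrt_eq_rpow, ← Real.sqrt_eq_rpow]
    calc Real.sqrt If ≤ Real.sqrt ((2 * M_Q / μ) ^ 2 * Ig) := Real.sqrt_le_sqrt hIf_le
      _ = (2 * M_Q / μ) * Real.sqrt Ig := by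
          rw [Real.sqrt_mul (sq_nonneg _), Real.sqrt_sq (by positivity)]
  have hfeq : (∫⁻ t in Set.Ioi (0:ℝ), ENNReal.ofReal (‖f t‖ ^ 2)) = ENNReal.ofReal If :=
    (ofReal_integral_eq_lintegral_ofReal hf2_int hf_nn).symm
  have hgeq : (∫⁻ t in Set.Ioi (0:ℝ), ENNReal.ofReal (‖g t‖ ^ 2)) = ENNReal.ofReal Ig :=
    (ofReal_integral_eq_lintegral_ofReal hg2_int hg_nn).symm
  rw [hfeq, hgeq, ENNReal.ofReal_rpow_of_nonneg hIf_nonneg (by norm_num),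
    ENNReal.ofReal_rpow_of_nonneg hIg_nonneg (by norm_num),
    ← ENNReal.ofReal_mul (by positivity)]
  exact ENNReal.ofReal_le_ofReal hreal
end

section
/- Let c ≥ 0 and C_init, C_prop > 0, and set Ŝ = max(C_init, C_prop), S = 2·Ŝ, q = ⌈S⌉² (which satisfies q ≥ 1), and ρ = 2^{−1/q}. Let (a_k)_{k∈ℕ} be nonnegative reals with Σ_{k∈ℕ} a_k² < ∞, and define b_k = (Σ_{k'≥k} a_{k'}²)^{1/2}. Assume b_0 ≤ C_init·c and b_{k+1} ≤ C_prop·a_k for every k ∈ ℕ. Then b_p ≤ S·ρ^p·c for every p ∈ ℕ. -/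
/-- **Abstract induction lemma behind Theorem 3.2.**
Given a nonnegative square-summable sequence `(a_k)` with tail-`L²` quantities
`b_k = (Σ_{k'≥k} a_{k'}²)^{1/2}` satisfying `b_0 ≤ C_init·c` and
`b_{k+1} ≤ C_prop·a_k`, the tails decay geometrically:
`b_p ≤ S·ρ^p·c` with `S = 2·max(C_init, C_prop)`, `q = ⌈S⌉²`, `ρ = 2^{-1/q}`. -/
theorem tail_decay_of_sequence
    (c C_init C_prop : ℝ) (hc : 0 ≤ c) (hCi : 0 < C_init) (hCp : 0 < C_prop)
    (Shat S ρ : ℝ) (q : ℕ)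
    (hShat : Shat = max C_init C_prop)
    (hS : S = 2 * Shat)
    (hq : q = (Nat.ceil S) ^ 2)
    (hρ : ρ = (2:ℝ) ^ (-(1 / (q:ℝ))))
    (a : ℕ → ℝ) (ha_nonneg : ∀ k, 0 ≤ a k)
    (ha_sum : Summable fun k => a k ^ 2)
    (b : ℕ → ℝ)
    (hb : ∀ k, b k = Real.sqrt (∑' k' : ℕ, a (k + k') ^ 2))
    (hb0 : b 0 ≤ C_init * c)
    (hbsucc : ∀ k, b (k + 1) ≤ C_prop * a k) :
    ∀ p : ℕ, b p ≤ S * ρ ^ p * c := by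
  have hx : (0:ℝ) < C_prop ^ 2 := by positivity
  have hx1 : (0:ℝ) < 1 + C_prop ^ 2 := by positivity
  set x := C_prop ^ 2 with hxdef
  set θ := C_prop / Real.sqrt (1 + x) with hθ
  have hθ0 : 0 ≤ θ := by positivity
  have hθsq : θ ^ 2 = x / (1 + x) := by
    rw [hθ, div_pow, Real.sq_sqrt hx1.le]
  -- basic facts about b
  have hbnn : ∀ k, 0 ≤ b k := fun k => (hb k) ▸ Real.sqrt_nonneg _
  have hsum : ∀ k, Summable fun k' => a (k + k') ^ 2 := fun k =>
    ha_sum.comp_injective (add_right_injective k)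
  have hbsq : ∀ k, b k ^ 2 = ∑' k' : ℕ, a (k + k') ^ 2 := by
    intro k
    rw [hb k, Real.sq_sqrt (tsum_nonneg fun k' => sq_nonneg _)]
  have hrec : ∀ k, b k ^ 2 = a k ^ 2 + b (k + 1) ^ 2 := by
    intro k
    rw [hbsq k, hbsq (k + 1), Summable.tsum_eq_zero_add (hsum k)]
    congr 1
    apply tsum_congr; intro n; congr 2; ring
  -- the one-step contraction
  have hstep : ∀ k, b (k + 1) ≤ θ * b k := by
    intro k
    have h1 : b (k + 1) ^ 2 ≤ x * a k ^ 2 := by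
      have := pow_le_pow_left₀ (hbnn (k + 1)) (hbsucc k) 2
      calc b (k+1)^2 ≤ (C_prop * a k)^2 := this
        _ = x * a k ^ 2 := by rw [hxdef]; ring
    have h2 : (1 + x) * b (k + 1) ^ 2 ≤ x * b k ^ 2 := by
      have := hrec k
      nlinarith [sq_nonneg (b (k+1))]
    have h3 : b (k + 1) ^ 2 ≤ (θ * b k) ^ 2 := by
      rw [mul_pow, hθsq]
      rw [div_mul_eq_mul_div, le_div_iff₀ hx1]
      nlinarith
    exact le_of_pow_le_pow_left₀ two_ne_zero (mul_nonneg hθ0 (hbnn k)) h3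
  -- q is positive and (q:ℝ) ≥ 4x
  have hShat_pos : 0 < Shat := by rw [hShat]; exact lt_max_of_lt_left hCi
  have hSpos : 0 < S := by rw [hS]; linarith
  have hceil : S ≤ (Nat.ceil S : ℝ) := Nat.le_ceil S
  have hqpos : 0 < q := by
    rw [hq]
    have : 0 < Nat.ceil S := Nat.ceil_pos.mpr hSpos
    positivity
  have hq4x : 4 * x ≤ (q : ℝ) := by
    have h1 : S ^ 2 ≤ ((Nat.ceil S : ℕ) : ℝ) ^ 2 := pow_le_pow_left₀ hSpos.le hceil 2
    have h2 : C_prop ≤ Shat := hShat ▸ le_max_right _ _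
    have h3 : (q : ℝ) = ((Nat.ceil S : ℕ) : ℝ) ^ 2 := by rw [hq]; push_cast; ring
    rw [h3, hxdef]
    nlinarith
  -- ρ ^ q = 1/2
  have hρpos : 0 < ρ := by rw [hρ]; positivity
  have hρq : ρ ^ q = 1 / 2 := by
    rw [hρ, ← Real.rpow_natCast ((2:ℝ) ^ (-(1 / (q:ℝ)))) q,
      ← Real.rpow_mul (by norm_num)]
    have : -(1 / (q:ℝ)) * q = -1 := by
      field_simp
    rw [this, Real.rpow_neg_one]
    norm_num
  -- θ ^ q ≤ 1/2
  have hθq : θ ^ q ≤ 1 / 2 := by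
    have hinv : (0:ℝ) < 1 / x := by positivity
    have hbern : 1 + (q:ℝ) * (1 / x) ≤ (1 + 1 / x) ^ q :=
      one_add_mul_le_pow (by linarith) q
    have h4 : (4:ℝ) ≤ (1 + 1 / x) ^ q := by
      have h5 : (3:ℝ) ≤ (q:ℝ) * (1 / x) := by
        rw [mul_one_div, le_div_iff₀ hx]; linarith
      linarith
    have hθ2q : (θ ^ q) ^ 2 ≤ (1 / 2) ^ 2 := by
      rw [← pow_mul, mul_comm, pow_mul, hθsq]
      have heq : x / (1 + x) = (1 + 1 / x)⁻¹ := by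
        field_simp
        ring
      rw [heq, inv_pow]
      rw [inv_le_comm₀ (by positivity) (by norm_num)]
      calc (((1:ℝ)/2)^2)⁻¹ = 4 := by norm_num
        _ ≤ (1 + 1/x) ^ q := h4
    exact le_of_pow_le_pow_left₀ two_ne_zero (by norm_num) hθ2q
  -- θ ≤ ρ
  have hθρ : θ ≤ ρ := by
    apply le_of_pow_le_pow_left₀ hqpos.ne' hρpos.le
    rw [hρq]; exact hθq
  -- induction
  have hmain : ∀ p : ℕ, b p ≤ θ ^ p * (C_init * c) := by
    intro p
    induction p with
    | zero => simpa using hb0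
    | succ n ih =>
      calc b (n + 1) ≤ θ * b n := hstep n
        _ ≤ θ * (θ ^ n * (C_init * c)) := by
            apply mul_le_mul_of_nonneg_left ih hθ0
        _ = θ ^ (n + 1) * (C_init * c) := by ring
  intro p
  have hCiS : C_init ≤ S := by
    rw [hS, hShat]
    have h := le_max_left C_init C_prop
    have h2 : (0:ℝ) < max C_init C_prop := lt_of_lt_of_le hCi h
    linarith
  calc b p ≤ θ ^ p * (C_init * c) := hmain p
    _ ≤ ρ ^ p * (S * c) := by
        apply mul_le_mul (pow_le_pow_left₀ hθ0 hθρ p)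
          (mul_le_mul_of_nonneg_right hCiS hc) (by positivity) (by positivity)
    _ = S * ρ ^ p * c := by ring
end

section
/- Let c ≥ 0 and C_init, C_prop > 0, set Ŝ = max(C_init, C_prop) and q = ⌈2·Ŝ⌉². Let (a_k)_{k∈ℕ} be nonnegative reals with Σ_{k∈ℕ} a_k² < ∞, and define b_k = (Σ_{k'≥k} a_{k'}²)^{1/2}. Assume b_0 ≤ C_init·c and b_{k+1} ≤ C_prop·a_k for every k ∈ ℕ. Then for every k ∈ ℕ one has b_{q·k} ≤ Ŝ·2^{−k}·c. -/
/-- **Induction step estimate (inequality (12) in the proof of Theorem 3.2).**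
Under the same assumptions as the abstract induction lemma, with
`Ŝ = max(C_init, C_prop)` and `q = ⌈2Ŝ⌉²`, one has `b_{q·k} ≤ Ŝ·2^{-k}·c`. -/
theorem tail_halving_of_sequence
    (c C_init C_prop : ℝ) (hc : 0 ≤ c) (hCi : 0 < C_init) (hCp : 0 < C_prop)
    (Shat : ℝ) (q : ℕ)
    (hShat : Shat = max C_init C_prop)
    (hq : q = (Nat.ceil (2 * Shat)) ^ 2)
    (a : ℕ → ℝ) (ha_nonneg : ∀ k, 0 ≤ a k)
    (ha_sum : Summable fun k => a k ^ 2)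
    (b : ℕ → ℝ)
    (hb : ∀ k, b k = Real.sqrt (∑' k' : ℕ, a (k + k') ^ 2))
    (hb0 : b 0 ≤ C_init * c)
    (hbsucc : ∀ k, b (k + 1) ≤ C_prop * a k) :
    ∀ k : ℕ, b (q * k) ≤ Shat * (1 / 2) ^ k * c := by
  have hS : 0 < Shat := by rw [hShat]; exact lt_max_of_lt_left hCi
  -- summability of tails
  have hsum : ∀ m : ℕ, Summable fun k' => a (m + k') ^ 2 := by
    intro m
    have := (summable_nat_add_iff m).2 ha_sum
    simpa [add_comm] using this
  have htnn : ∀ m : ℕ, 0 ≤ ∑' k' : ℕ, a (m + k') ^ 2 := fun m =>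
    tsum_nonneg (fun k' => sq_nonneg _)
  have hbnn : ∀ m, 0 ≤ b m := fun m => (hb m) ▸ Real.sqrt_nonneg _
  have hbsq : ∀ m, b m ^ 2 = ∑' k' : ℕ, a (m + k') ^ 2 := fun m => by
    rw [hb m, Real.sq_sqrt (htnn m)]
  -- key decomposition
  have key : ∀ m n : ℕ, b m ^ 2 = (∑ j ∈ Finset.range n, a (m + j) ^ 2) + b (m + n) ^ 2 := by
    intro m n
    have h := Summable.sum_add_tsum_nat_add n (hsum m)
    rw [hbsq m, hbsq (m + n), ← h]
    congr 1
    exact tsum_congr fun i => by rw [show m + n + i = m + (i + n) by omega]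
  -- b is nonincreasing: b (m+n) ≤ b m
  have hmono : ∀ m n : ℕ, b (m + n) ≤ b m := by
    intro m n
    have hsq : b (m + n) ^ 2 ≤ b m ^ 2 := by
      rw [key m n]
      have : 0 ≤ ∑ j ∈ Finset.range n, a (m + j) ^ 2 :=
        Finset.sum_nonneg fun j _ => sq_nonneg _
      linarith
    exact (pow_le_pow_iff_left₀ (hbnn _) (hbnn m) two_ne_zero).1 hsq
  -- q ≥ 4 C_prop ^ 2
  have hqpos : (2 * C_prop) ^ 2 ≤ (q : ℝ) := by
    have h1 : 2 * C_prop ≤ (Nat.ceil (2 * Shat) : ℝ) := by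
      have : 2 * C_prop ≤ 2 * Shat := by
        rw [hShat]; nlinarith [le_max_right C_init C_prop]
      exact this.trans (Nat.le_ceil _)
    have h2 : (0:ℝ) ≤ 2 * C_prop := by positivity
    rw [hq]
    push_cast
    exact pow_le_pow_left₀ h2 h1 2
  -- halving step
  have hstep : ∀ m : ℕ, b (m + q) ≤ b m / 2 := by
    intro m
    -- sum of b(m+j+1)^2 over j < q is ≥ q * b(m+q)^2
    have hlow : (q : ℝ) * b (m + q) ^ 2 ≤ ∑ j ∈ Finset.range q, b (m + j + 1) ^ 2 := by
      have : ∀ j ∈ Finset.range q, b (m + q) ^ 2 ≤ b (m + j + 1) ^ 2 := by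
        intro j hj
        have hj' : j + 1 ≤ q := Finset.mem_range.1 hj
        have : b (m + q) ≤ b (m + j + 1) := by
          have := hmono (m + j + 1) (q - (j + 1))
          rwa [show m + j + 1 + (q - (j+1)) = m + q by omega] at this
        exact pow_le_pow_left₀ (hbnn _) this 2
      calc (q : ℝ) * b (m + q) ^ 2 = ∑ _j ∈ Finset.range q, b (m + q) ^ 2 := by
            simp [Finset.sum_const, mul_comm]
        _ ≤ _ := Finset.sum_le_sum this
    -- and ≤ C_prop^2 * (b m ^2 - b (m+q)^2) ≤ C_prop^2 * b m ^2
    have hup : ∑ j ∈ Finset.range q, b (m + j + 1) ^ 2 ≤ C_prop ^ 2 * b m ^ 2 := by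
      have h1 : ∑ j ∈ Finset.range q, b (m + j + 1) ^ 2
          ≤ ∑ j ∈ Finset.range q, C_prop ^ 2 * a (m + j) ^ 2 := by
        apply Finset.sum_le_sum
        intro j _
        have := hbsucc (m + j)
        have h2 : b (m + j + 1) ^ 2 ≤ (C_prop * a (m + j)) ^ 2 :=
          pow_le_pow_left₀ (hbnn _) this 2
        calc b (m + j + 1) ^ 2 ≤ (C_prop * a (m + j)) ^ 2 := h2
          _ = C_prop ^ 2 * a (m + j) ^ 2 := by ring
      rw [← Finset.mul_sum] at h1
      have h3 : ∑ j ∈ Finset.range q, a (m + j) ^ 2 ≤ b m ^ 2 := by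
        rw [key m q]; nlinarith [sq_nonneg (b (m + q))]
      have h4 : C_prop ^ 2 * (∑ j ∈ Finset.range q, a (m + j) ^ 2) ≤ C_prop ^ 2 * b m ^ 2 :=
        mul_le_mul_of_nonneg_left h3 (sq_nonneg _)
      linarith
    have h5 : (q : ℝ) * b (m + q) ^ 2 ≤ C_prop ^ 2 * b m ^ 2 := hlow.trans hup
    have h6 : 4 * C_prop ^ 2 * b (m + q) ^ 2 ≤ (q : ℝ) * b (m + q) ^ 2 := by
      nlinarith [sq_nonneg (b (m + q))]
    have hsq : b (m + q) ^ 2 ≤ (b m / 2) ^ 2 := by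
      nlinarith [mul_pos hCp hCp]
    have : 0 ≤ b m / 2 := by linarith [hbnn m]
    exact (pow_le_pow_iff_left₀ (hbnn _) this two_ne_zero).1 hsq
  -- induction
  intro k
  have main : b (q * k) ≤ (1 / 2) ^ k * b 0 := by
    induction k with
    | zero => simp
    | succ n ih =>
      have : b (q * (n + 1)) ≤ b (q * n) / 2 := by
        have := hstep (q * n)
        rwa [show q * n + q = q * (n + 1) by ring] at this
      calc b (q * (n + 1)) ≤ b (q * n) / 2 := this
        _ ≤ ((1 / 2) ^ n * b 0) / 2 := by linarith
        _ = (1 / 2) ^ (n + 1) * b 0 := by ring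
  have hb0' : b 0 ≤ Shat * c := by
    have : C_init ≤ Shat := hShat ▸ le_max_left _ _
    calc b 0 ≤ C_init * c := hb0
      _ ≤ Shat * c := mul_le_mul_of_nonneg_right this hc
  calc b (q * k) ≤ (1 / 2) ^ k * b 0 := main
    _ ≤ (1 / 2) ^ k * (Shat * c) := by
        apply mul_le_mul_of_nonneg_left hb0' (by positivity)
    _ = Shat * (1 / 2) ^ k * c := by ring
end

section
/- Let β > 0, κ ≥ 0 and M > 0. There exist constants C, σ > 0 such that for every initial condition (y0, v0) ∈ ℝ² with (y0² + v0²)^{1/2} ≤ M there exist differentiable functions y, v : [0,∞) → ℝ and a function u : [0,∞) → ℝ with y(0) = y0, v(0) = v0, satisfying for all t ≥ 0 the equations y'(t) = v(t) and v'(t) = −β·v(t) − κ·v(t)·|v(t)| + u(t), together with the bounds (y(t)² + v(t)²)^{1/2} ≤ C·e^{−σt}·(y0² + v0²)^{1/2} and |u(t)| ≤ C·e^{−σt}·(y0² + v0²)^{1/2}. -/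
/-- Key decay estimate: `e^{-t}|c + d t| ≤ (|c|+|d|) e^{-t/2}` for `t ≥ 0`. -/
lemma vehicle_key_bound (t c d : ℝ) (ht : 0 ≤ t) :
    |Real.exp (-t) * (c + d * t)| ≤ (|c| + |d|) * Real.exp (-(1/2) * t) := by
  have hte : t * Real.exp (-(1/2) * t) ≤ 1 := by
    have h2 := Real.add_one_le_exp (t / 4)
    have h3 : Real.exp (t / 2) = Real.exp (t / 4) * Real.exp (t / 4) := by
      rw [← Real.exp_add]; ring_nf
    have h2' : 0 ≤ t / 4 + 1 := by linarith
    have h4 : (t / 4 + 1) * (t / 4 + 1) ≤ Real.exp (t / 4) * Real.exp (t / 4) :=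
      mul_le_mul h2 h2 h2' (Real.exp_pos _).le
    have ht2 : t ≤ Real.exp (t / 2) := by nlinarith [sq_nonneg (t / 4 - 1)]
    have : Real.exp (-(1/2) * t) = (Real.exp (t / 2))⁻¹ := by
      rw [← Real.exp_neg]; ring_nf
    rw [this, mul_inv_le_iff₀ (Real.exp_pos _)]
    simpa using ht2
  have he : Real.exp (-t) = Real.exp (-(1/2) * t) * Real.exp (-(1/2) * t) := by
    rw [← Real.exp_add]; ring_nf
  have hE : 0 < Real.exp (-(1/2) * t) := Real.exp_pos _
  have hE1 : Real.exp (-(1/2) * t) ≤ 1 := by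
    have h0 : (-(1/2) * t : ℝ) ≤ 0 := by linarith
    calc Real.exp (-(1/2) * t) ≤ Real.exp 0 := Real.exp_le_exp.mpr h0
      _ = 1 := Real.exp_zero
  calc |Real.exp (-t) * (c + d * t)| = Real.exp (-t) * |c + d * t| := by
        rw [abs_mul, abs_of_pos (Real.exp_pos _)]
    _ ≤ Real.exp (-t) * (|c| + |d| * t) := by
        apply mul_le_mul_of_nonneg_left _ (Real.exp_pos _).le
        calc |c + d * t| ≤ |c| + |d * t| := abs_add_le _ _
          _ = |c| + |d| * t := by rw [abs_mul, abs_of_nonneg ht]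
    _ ≤ (|c| + |d|) * Real.exp (-(1/2) * t) := by
        rw [he]
        nlinarith [mul_le_mul_of_nonneg_left hte (mul_nonneg (abs_nonneg d) hE.le),
          mul_le_mul_of_nonneg_left hE1 (mul_nonneg (abs_nonneg c) hE.le)]

/-- **Asymptotic controllability of a single vehicle (verification of
Assumption 3.1 in the numerical example).**
For the double integrator with viscous and quadratic drag
`ẏ = v`, `v̇ = -βv - κ·v·|v| + u` with `β > 0`, `κ ≥ 0`, there are uniform
constants `C, σ > 0` such that from every initial condition of norm at most `M`
there is a control `u` and a trajectory `(y, v)` decaying exponentially, with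
the control decaying exponentially as well. -/
theorem vehicle_asymptotic_controllability
    (β κ M : ℝ) (hβ : 0 < β) (hκ : 0 ≤ κ) (hM : 0 < M) :
    ∃ C σ : ℝ, 0 < C ∧ 0 < σ ∧
      ∀ y0 v0 : ℝ, Real.sqrt (y0 ^ 2 + v0 ^ 2) ≤ M →
        ∃ y v u : ℝ → ℝ,
          y 0 = y0 ∧ v 0 = v0 ∧
          (∀ t ≥ (0:ℝ), HasDerivAt y (v t) t) ∧
          (∀ t ≥ (0:ℝ),
            HasDerivAt v (-β * v t - κ * v t * |v t| + u t) t) ∧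
          (∀ t ≥ (0:ℝ),
            Real.sqrt (y t ^ 2 + v t ^ 2) ≤
              C * Real.exp (-σ * t) * Real.sqrt (y0 ^ 2 + v0 ^ 2)) ∧
          (∀ t ≥ (0:ℝ),
            |u t| ≤ C * Real.exp (-σ * t) * Real.sqrt (y0 ^ 2 + v0 ^ 2)) := by
  refine ⟨6 + 4 * β + 16 * κ * M, 1/2, by positivity, by norm_num, ?_⟩
  intro y0 v0 hrM
  set r := Real.sqrt (y0 ^ 2 + v0 ^ 2) with hr
  have hr0 : 0 ≤ r := Real.sqrt_nonneg _
  have hy0 : |y0| ≤ r := by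
    rw [hr, ← Real.sqrt_sq_eq_abs]
    exact Real.sqrt_le_sqrt (by nlinarith)
  have hv0 : |v0| ≤ r := by
    rw [hr, ← Real.sqrt_sq_eq_abs]
    exact Real.sqrt_le_sqrt (by nlinarith)
  set b := y0 + v0 with hb
  set y : ℝ → ℝ := fun t => Real.exp (-t) * (y0 + b * t) with hy
  set v : ℝ → ℝ := fun t => Real.exp (-t) * (v0 + (-b) * t) with hv
  set w : ℝ → ℝ := fun t => Real.exp (-t) * (-(y0 + 2 * v0) + b * t) with hw
  refine ⟨y, v, fun t => w t + β * v t + κ * v t * |v t|, by simp [hy], by simp [hv], ?_, ?_, ?_, ?_⟩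
  · -- y' = v
    intro t _
    have h1 : HasDerivAt (fun s : ℝ => Real.exp (-s)) (Real.exp (-t) * (-1)) t :=
      ((hasDerivAt_id t).neg).exp
    have h2 : HasDerivAt (fun s : ℝ => y0 + b * s) b t := by
      simpa using ((hasDerivAt_id t).const_mul b).const_add y0
    have := h1.mul h2
    refine HasDerivAt.congr_deriv this ?_
    simp only [hv, hb]; ring
  · -- v' = -βv - κ v |v| + u
    intro t _
    have h1 : HasDerivAt (fun s : ℝ => Real.exp (-s)) (Real.exp (-t) * (-1)) t :=
      ((hasDerivAt_id t).neg).exp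
    have h2 : HasDerivAt (fun s : ℝ => v0 + (-b) * s) (-b) t := by
      simpa using ((hasDerivAt_id t).const_mul (-b)).const_add v0
    have := h1.mul h2
    refine HasDerivAt.congr_deriv this ?_
    simp only [hv, hw, hb]; ring
  · -- state bound
    intro t ht
    have hyb : |y t| ≤ 3 * r * Real.exp (-(1/2) * t) := by
      have := vehicle_key_bound t y0 b ht
      have hbb : |b| ≤ 2 * r := by
        calc |b| ≤ |y0| + |v0| := abs_add_le _ _
          _ ≤ 2 * r := by linarith
      calc |y t| ≤ (|y0| + |b|) * Real.exp (-(1/2) * t) := this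
        _ ≤ 3 * r * Real.exp (-(1/2) * t) := by
            apply mul_le_mul_of_nonneg_right _ (Real.exp_pos _).le; linarith
    have hvb : |v t| ≤ 3 * r * Real.exp (-(1/2) * t) := by
      have := vehicle_key_bound t v0 (-b) ht
      have hbb : |(-b)| ≤ 2 * r := by
        rw [abs_neg]
        calc |b| ≤ |y0| + |v0| := abs_add_le _ _
          _ ≤ 2 * r := by linarith
      calc |v t| ≤ (|v0| + |(-b)|) * Real.exp (-(1/2) * t) := this
        _ ≤ 3 * r * Real.exp (-(1/2) * t) := by
            apply mul_le_mul_of_nonneg_right _ (Real.exp_pos _).le; linarith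
    have hE : 0 < Real.exp (-(1/2) * t) := Real.exp_pos _
    calc Real.sqrt (y t ^ 2 + v t ^ 2) ≤ |y t| + |v t| := by
          rw [← Real.sqrt_sq (by positivity : (0:ℝ) ≤ |y t| + |v t|)]
          apply Real.sqrt_le_sqrt
          have := abs_nonneg (y t); have := abs_nonneg (v t)
          nlinarith [sq_abs (y t), sq_abs (v t)]
      _ ≤ 6 * r * Real.exp (-(1/2) * t) := by linarith
      _ ≤ (6 + 4 * β + 16 * κ * M) * Real.exp (-(1/2) * t) * r := by
          have hX : (0:ℝ) ≤ 4 * β + 16 * κ * M := by positivity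
          nlinarith [mul_nonneg (mul_nonneg hX hE.le) hr0]
  · -- control bound
    intro t ht
    have hvb : |v t| ≤ 3 * r * Real.exp (-(1/2) * t) := by
      have := vehicle_key_bound t v0 (-b) ht
      have hbb : |(-b)| ≤ 2 * r := by
        rw [abs_neg]
        calc |b| ≤ |y0| + |v0| := abs_add_le _ _
          _ ≤ 2 * r := by linarith
      calc |v t| ≤ (|v0| + |(-b)|) * Real.exp (-(1/2) * t) := this
        _ ≤ 3 * r * Real.exp (-(1/2) * t) := by
            apply mul_le_mul_of_nonneg_right _ (Real.exp_pos _).le; linarith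
    have hwb : |w t| ≤ 5 * r * Real.exp (-(1/2) * t) := by
      have := vehicle_key_bound t (-(y0 + 2 * v0)) b ht
      have hbb : |b| ≤ 2 * r := by
        calc |b| ≤ |y0| + |v0| := abs_add_le _ _
          _ ≤ 2 * r := by linarith
      have hcc : |(-(y0 + 2 * v0))| ≤ 3 * r := by
        rw [abs_neg]
        calc |y0 + 2 * v0| ≤ |y0| + |2 * v0| := abs_add_le _ _
          _ = |y0| + 2 * |v0| := by rw [abs_mul]; norm_num
          _ ≤ 3 * r := by linarith
      calc |w t| ≤ (|(-(y0 + 2 * v0))| + |b|) * Real.exp (-(1/2) * t) := this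
        _ ≤ 5 * r * Real.exp (-(1/2) * t) := by
            apply mul_le_mul_of_nonneg_right _ (Real.exp_pos _).le; linarith
    have hE : 0 < Real.exp (-(1/2) * t) := Real.exp_pos _
    have hE1 : Real.exp (-(1/2) * t) ≤ 1 := by
      have h0 : (-(1/2) * t : ℝ) ≤ 0 := by linarith
      calc Real.exp (-(1/2) * t) ≤ Real.exp 0 := Real.exp_le_exp.mpr h0
        _ = 1 := Real.exp_zero
    have hrM' : r ≤ M := hrM
    have hv2 : κ * |v t| * |v t| ≤ 16 * κ * M * r * Real.exp (-(1/2) * t) := by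
      have h1 : |v t| * |v t| ≤ (3 * r * Real.exp (-(1/2) * t)) * (3 * r * Real.exp (-(1/2) * t)) := by
        apply mul_le_mul hvb hvb (abs_nonneg _) (by positivity)
      have h2 : (3 * r * Real.exp (-(1/2) * t)) * (3 * r * Real.exp (-(1/2) * t))
          ≤ 16 * M * r * Real.exp (-(1/2) * t) := by
        have hre : r * Real.exp (-(1/2) * t) ≤ M * 1 := mul_le_mul hrM' hE1 hE.le hM.le
        nlinarith [mul_le_mul_of_nonneg_left hre (mul_nonneg hr0 hE.le),
          mul_nonneg hM.le (mul_nonneg hr0 hE.le)]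
      nlinarith [mul_le_mul_of_nonneg_left h1 hκ, mul_le_mul_of_nonneg_left h2 hκ]
    have habs : abs (w t + β * v t + κ * v t * abs (v t)) ≤
        abs (w t) + β * abs (v t) + κ * abs (v t) * abs (v t) := by
      have h1 := abs_add_le (w t + β * v t) (κ * v t * abs (v t))
      have h2 := abs_add_le (w t) (β * v t)
      have h3 : abs (β * v t) = β * abs (v t) := by rw [abs_mul, abs_of_pos hβ]
      have h4 : abs (κ * v t * abs (v t)) = κ * abs (v t) * abs (v t) := by
        rw [abs_mul, abs_mul, abs_of_nonneg hκ, abs_abs]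
      linarith
    have hfin : abs (w t) + β * abs (v t) + κ * abs (v t) * abs (v t) ≤
        (6 + 4 * β + 16 * κ * M) * Real.exp (-(1/2) * t) * r := by
      nlinarith [mul_le_mul_of_nonneg_left hvb hβ.le,
        mul_nonneg (mul_nonneg hr0 hE.le) hβ.le, mul_nonneg hr0 hE.le]
    exact le_trans habs hfin
end
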